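/- arXiv:1703.10635 — 5 statements merged into one kernel-verified Lean document; each statement's English description precedes it below -/
import Mathlib

section
/- Let ℒ ⊂ ℝ^{n+1} be a lattice, y0 > 0, and v ∈ ℝ^n. Every function g ∈ Π_{y0}(𝒳_ℒ) is invariant under translation by v (that is, g(x − v) = g(x) for all x ∈ ℝ^n) if and only if one of the following holds: (I) (v,0) ∈ ℒ; or (II) (0,y0) ∈ ℒ and (v,y1) ∈ ℒ for some y1 ∈ ℝ. -/
open MeasureTheory
open scoped Classical

noncomputable section

/-- The Euclidean dot product on `ℝⁿ`. -/
def dotn {n : ℕ} (a b : Fin n → ℝ) : ℝ := ∑ i, a i * b i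

/-- `ℝ^{n+1}` viewed as `ℝⁿ × ℝ`, points written `(x, y)`. -/
abbrev V1 (n : ℕ) := (Fin n → ℝ) × ℝ

/-- The standard inner product on `ℝ^{n+1} = ℝⁿ × ℝ`. -/
def dot1 {n : ℕ} (k p : V1 n) : ℝ := dotn k.1 p.1 + k.2 * p.2

/-- `e^{2πit}`. -/
def expz (t : ℝ) : ℂ := Complex.exp (2 * (Real.pi : ℂ) * Complex.I * (t : ℂ))

/-- The wave `ω_k` on `ℝ^{n+1}`. -/
def wave {n : ℕ} (k : V1 n) : V1 n → ℂ := fun p => expz (dot1 k p)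

/-- The wave `ω_k̃` on `ℝⁿ`. -/
def waveN {n : ℕ} (k : Fin n → ℝ) : (Fin n → ℝ) → ℂ := fun x => expz (dotn k x)

/-- The projection operator `Π_{y0}`. -/
def Proj {n : ℕ} (y0 : ℝ) (f : V1 n → ℂ) : (Fin n → ℝ) → ℂ :=
  fun x => ∫ y in (0:ℝ)..y0, f (x, y)

/-- The lattice generated over `ℤ` by the vectors `b i`. -/
def latticeOf {n : ℕ} (b : Fin (n+1) → V1 n) : Set (V1 n) :=
  {v | ∃ c : Fin (n+1) → ℤ, v = ∑ i, (c i : ℝ) • b i}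

/-- The dual lattice `ℒ*` of a subset of `ℝ^{n+1}`. -/
def dualLat {n : ℕ} (L : Set (V1 n)) : Set (V1 n) :=
  {k | ∀ l ∈ L, ∃ m : ℤ, dot1 k l = (m : ℝ)}

/-- The dual lattice of a subset of `ℝⁿ`. -/
def dualN {n : ℕ} (Lt : Set (Fin n → ℝ)) : Set (Fin n → ℝ) :=
  {k | ∀ v ∈ Lt, ∃ m : ℤ, dotn k v = (m : ℝ)}

/-- `𝒳_ℒ`: the ℂ-linear span of the waves `ω_k`, `k ∈ ℒ*`. -/
def XL {n : ℕ} (L : Set (V1 n)) : Submodule ℂ (V1 n → ℂ) :=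
  Submodule.span ℂ (wave '' dualLat L)

/-- The ℂ-linear span of the waves `ω_k̃`, `k̃` in the dual of a planar lattice. -/
def XN {n : ℕ} (Lt : Set (Fin n → ℝ)) : Submodule ℂ ((Fin n → ℝ) → ℂ) :=
  Submodule.span ℂ (waveN '' dualN Lt)

/-- Membership in `O(n)`: a linear automorphism of `ℝⁿ` preserving the dot product. -/
def IsOrthoN {n : ℕ} (α : (Fin n → ℝ) ≃ₗ[ℝ] (Fin n → ℝ)) : Prop :=
  ∀ a b, dotn (α a) (α b) = dotn a b

/-- Membership in `O(n+1)`: a linear automorphism of `ℝ^{n+1}` preserving the inner product. -/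
def IsOrtho1 {n : ℕ} (δ : V1 n ≃ₗ[ℝ] V1 n) : Prop :=
  ∀ a b, dot1 (δ a) (δ b) = dot1 a b

/-- The holohedry `H_ℒ`: orthogonal transformations mapping `ℒ` to itself. -/
def HolL {n : ℕ} (L : Set (V1 n)) : Set (V1 n ≃ₗ[ℝ] V1 n) :=
  {γ | IsOrtho1 γ ∧ (⇑γ) '' L = L}

/-- `α₊`: acts as `α` on `ℝⁿ` and `+1` on the last coordinate. -/
def aPlus {n : ℕ} (α : (Fin n → ℝ) ≃ₗ[ℝ] (Fin n → ℝ)) : V1 n ≃ₗ[ℝ] V1 n :=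
  α.prodCongr (LinearEquiv.refl ℝ ℝ)

/-- `α₋`: acts as `α` on `ℝⁿ` and `−1` on the last coordinate. -/
def aMinus {n : ℕ} (α : (Fin n → ℝ) ≃ₗ[ℝ] (Fin n → ℝ)) : V1 n ≃ₗ[ℝ] V1 n :=
  α.prodCongr (LinearEquiv.neg ℝ)

/-- The group `J̃` of induced orthogonal symmetries. -/
def Jt {n : ℕ} (L : Set (V1 n)) (y0 : ℝ) : Set ((Fin n → ℝ) ≃ₗ[ℝ] (Fin n → ℝ)) :=
  {α | IsOrthoN α ∧
    (aPlus α ∈ HolL L ∨ ((((0 : Fin n → ℝ), y0) : V1 n) ∈ L ∧ aMinus α ∈ HolL L))}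

/-- The subset `J̃↑` of `H_ℒ`. -/
def Jup {n : ℕ} (L : Set (V1 n)) (y0 : ℝ) : Set (V1 n ≃ₗ[ℝ] V1 n) :=
  {γ | ∃ α ∈ Jt L y0,
    (γ = aPlus α ∧ aPlus α ∈ HolL L) ∨ (γ = aMinus α ∧ aMinus α ∈ HolL L)}

/-- The set `J^α_k = {δ ∈ H_ℒ : P(δk) = α k̃}`. -/
def Jset {n : ℕ} (L : Set (V1 n)) (k : V1 n) (α : (Fin n → ℝ) ≃ₗ[ℝ] (Fin n → ℝ)) :
    Set (V1 n ≃ₗ[ℝ] V1 n) :=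
  {δ ∈ HolL L | (δ k).1 = α k.1}

/-- The set `J^{Id}_k = {δ ∈ H_ℒ : P(δk) = k̃}`. -/
def JId {n : ℕ} (L : Set (V1 n)) (k : V1 n) : Set (V1 n ≃ₗ[ℝ] V1 n) :=
  {δ ∈ HolL L | (δ k).1 = k.1}

/-- The set `S_k = ⋃_{α ∈ J̃} J^α_k`. -/
def Sk {n : ℕ} (L : Set (V1 n)) (y0 : ℝ) (k : V1 n) : Set (V1 n ≃ₗ[ℝ] V1 n) :=
  ⋃ α ∈ Jt L y0, Jset L k α

/-- The isotropy subgroup `Σ_k` of `k` in `H_ℒ`. -/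
def Sigk {n : ℕ} (L : Set (V1 n)) (k : V1 n) : Set (V1 n ≃ₗ[ℝ] V1 n) :=
  {δ ∈ HolL L | δ k = k}

/-- The orbit `H_ℒ·k`. -/
def HOrb {n : ℕ} (L : Set (V1 n)) (k : V1 n) : Set (V1 n) :=
  (fun δ : V1 n ≃ₗ[ℝ] V1 n => δ k) '' HolL L

/-- The orbit `J̃·u`. -/
def JOrb {n : ℕ} (L : Set (V1 n)) (y0 : ℝ) (u : Fin n → ℝ) : Set (Fin n → ℝ) :=
  (fun α : (Fin n → ℝ) ≃ₗ[ℝ] (Fin n → ℝ) => α u) '' Jt L y0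

/-- The single mode `V`: the ℂ-span of the waves `ω_{δk}`, `δ ∈ H_ℒ`. -/
def modeV {n : ℕ} (L : Set (V1 n)) (k : V1 n) : Submodule ℂ (V1 n → ℂ) :=
  Submodule.span ℂ ((fun δ : V1 n ≃ₗ[ℝ] V1 n => wave (δ k)) '' HolL L)

/-- The projected lattice `𝓛̃`. -/
def projLat {n : ℕ} (L : Set (V1 n)) (y0 : ℝ) : Set (Fin n → ℝ) :=
  if (((0 : Fin n → ℝ), y0) : V1 n) ∈ L then Prod.fst '' L
  else Prod.fst '' (L ∩ {p : V1 n | p.2 = 0})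

namespace Aux
open MeasureTheory intervalIntegral

lemma dotn_add_left {n : ℕ} (a b c : Fin n → ℝ) : dotn (a + b) c = dotn a c + dotn b c := by
  simp [dotn, add_mul, Finset.sum_add_distrib]

lemma dotn_smul_left {n : ℕ} (r : ℝ) (a c : Fin n → ℝ) : dotn (r • a) c = r * dotn a c := by
  simp [dotn, Finset.mul_sum, mul_assoc]

lemma dotn_sub_left {n : ℕ} (a b c : Fin n → ℝ) : dotn (a - b) c = dotn a c - dotn b c := by
  simp [dotn, sub_mul, Finset.sum_sub_distrib]

lemma dotn_zero_left {n : ℕ} (c : Fin n → ℝ) : dotn 0 c = 0 := by simp [dotn]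

lemma dotn_zero_right {n : ℕ} (c : Fin n → ℝ) : dotn c 0 = 0 := by simp [dotn]

lemma dotn_add_right {n : ℕ} (a b c : Fin n → ℝ) : dotn c (a + b) = dotn c a + dotn c b := by
  simp [dotn, mul_add, Finset.sum_add_distrib]

lemma dotn_sub_right {n : ℕ} (a b c : Fin n → ℝ) : dotn c (a - b) = dotn c a - dotn c b := by
  simp [dotn, mul_sub, Finset.sum_sub_distrib]

lemma dotn_smul_right {n : ℕ} (r : ℝ) (a c : Fin n → ℝ) : dotn c (r • a) = r * dotn c a := by
  simp only [dotn, Pi.smul_apply, smul_eq_mul, Finset.mul_sum]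
  exact Finset.sum_congr rfl fun i _ => by ring

lemma dot1_add_left {n : ℕ} (a b c : V1 n) : dot1 (a + b) c = dot1 a c + dot1 b c := by
  simp [dot1, dotn_add_left, add_mul]; ring

lemma dot1_sub_left {n : ℕ} (a b c : V1 n) : dot1 (a - b) c = dot1 a c - dot1 b c := by
  simp [dot1, dotn_sub_left, sub_mul]; ring

lemma dot1_smul_left {n : ℕ} (r : ℝ) (a c : V1 n) : dot1 (r • a) c = r * dot1 a c := by
  simp [dot1, dotn_smul_left, Prod.smul_fst, Prod.smul_snd, smul_eq_mul]; ring

lemma dot1_add_right {n : ℕ} (a b c : V1 n) : dot1 c (a + b) = dot1 c a + dot1 c b := by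
  simp [dot1, dotn_add_right, mul_add]; ring

lemma dot1_smul_right {n : ℕ} (r : ℝ) (a c : V1 n) : dot1 c (r • a) = r * dot1 c a := by
  simp [dot1, dotn_smul_right, Prod.smul_fst, Prod.smul_snd, smul_eq_mul]; ring

lemma dot1_self_eq_zero {n : ℕ} {k : V1 n} (h : dot1 k k = 0) : k = 0 := by
  have hd : dotn k.1 k.1 + k.2 * k.2 = 0 := h
  have hnn : (0:ℝ) ≤ dotn k.1 k.1 :=
    Finset.sum_nonneg (fun i _ => mul_self_nonneg (k.1 i))
  have h1 : dotn k.1 k.1 = 0 ∧ k.2 * k.2 = 0 := by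
    constructor <;> nlinarith [mul_self_nonneg k.2]
  have h2 : k.1 = 0 := by
    funext i
    have := (Finset.sum_eq_zero_iff_of_nonneg (fun i (_ : i ∈ Finset.univ) => mul_self_nonneg (k.1 i))).mp h1.1 i (Finset.mem_univ i)
    exact mul_self_eq_zero.mp this
  have h3 : k.2 = 0 := mul_self_eq_zero.mp h1.2
  exact Prod.ext h2 h3

def dotMap (n : ℕ) : V1 n →ₗ[ℝ] Module.Dual ℝ (V1 n) where
  toFun k := { toFun := fun p => dot1 k p,
               map_add' := fun a b => dot1_add_right a b k,
               map_smul' := fun r a => dot1_smul_right r a k }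
  map_add' a b := by
    apply LinearMap.ext; intro p; exact dot1_add_left a b p
  map_smul' r a := by
    apply LinearMap.ext; intro p; exact dot1_smul_left r a p

lemma dotMap_surjective (n : ℕ) : Function.Surjective (dotMap n) := by
  have hinj : Function.Injective (dotMap n) := by
    intro k k' h
    have h0 : ∀ p, dot1 k p = dot1 k' p := fun p => congrArg (fun f => f p) (congrArg DFunLike.coe h)
    have : dot1 (k - k') (k - k') = 0 := by
      rw [dot1_sub_left, h0, sub_self]
    have := dot1_self_eq_zero this
    exact sub_eq_zero.mp this
  exact (LinearMap.injective_iff_surjective_of_finrank_eq_finrank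
    Subspace.dual_finrank_eq.symm).mp hinj


lemma finrank_V1 (n : ℕ) : Module.finrank ℝ (V1 n) = n + 1 := by
  simp [Module.finrank_prod]

lemma dual_dual {n : ℕ} (b : Fin (n+1) → V1 n) (hb : LinearIndependent ℝ b)
    (p : V1 n) (h : ∀ k ∈ dualLat (latticeOf b), ∃ m : ℤ, dot1 k p = (m : ℝ)) :
    p ∈ latticeOf b := by
  have hcard : Fintype.card (Fin (n+1)) = Module.finrank ℝ (V1 n) := by
    simp [finrank_V1]
  let B := basisOfLinearIndependentOfCardEqFinrank hb hcard
  have hB : ⇑B = b := coe_basisOfLinearIndependentOfCardEqFinrank hb hcard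
  have key : ∀ j, ∃ m : ℤ, B.repr p j = (m : ℝ) := by
    intro j
    obtain ⟨k, hk⟩ := dotMap_surjective n (B.coord j)
    have hkapp : ∀ q, dot1 k q = B.coord j q := fun q =>
      congrArg (fun f => f q) (congrArg DFunLike.coe hk)
    have hkdual : k ∈ dualLat (latticeOf b) := by
      rintro l ⟨c, rfl⟩
      refine ⟨c j, ?_⟩
      rw [hkapp]
      have : (∑ i, (c i : ℝ) • b i) = ∑ i, (c i : ℝ) • B i := by rw [hB]
      rw [this]
      simp [Module.Basis.coord_apply, map_sum, Module.Basis.repr_self, Finsupp.single_apply]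
    obtain ⟨m, hm⟩ := h k hkdual
    exact ⟨m, by rw [← hm, hkapp]; rfl⟩
  choose m hm using key
  refine ⟨m, ?_⟩
  conv_lhs => rw [← B.sum_repr p]
  rw [hB] at *
  exact Finset.sum_congr rfl fun i _ => by rw [hm]


lemma twoPiI_ne : (2 * (Real.pi : ℂ) * Complex.I) ≠ 0 := by
  simp [Real.pi_ne_zero, Complex.I_ne_zero, Complex.ofReal_ne_zero]

lemma expz_add (a b : ℝ) : expz (a + b) = expz a * expz b := by
  rw [expz, expz, expz, ← Complex.exp_add]
  congr 1
  push_cast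
  ring

lemma expz_eq_one_iff (t : ℝ) : expz t = 1 ↔ ∃ m : ℤ, t = (m : ℝ) := by
  rw [expz, Complex.exp_eq_one_iff]
  constructor
  · rintro ⟨m, hm⟩
    refine ⟨m, ?_⟩
    have : (2 * (Real.pi : ℂ) * Complex.I) * (t : ℂ) = (2 * (Real.pi : ℂ) * Complex.I) * (m : ℂ) := by
      rw [hm]; ring
    have := mul_left_cancel₀ twoPiI_ne this
    exact_mod_cast this
  · rintro ⟨m, rfl⟩
    exact ⟨m, by push_cast; ring⟩

lemma expz_int (m : ℤ) : expz (m : ℝ) = 1 := (expz_eq_one_iff _).mpr ⟨m, rfl⟩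

lemma expz_sub_int (a : ℝ) (m : ℤ) : expz (a - (m : ℝ)) = expz a := by
  have := expz_add (a - (m : ℝ)) (m : ℝ)
  rw [sub_add_cancel, expz_int, mul_one] at this
  exact this.symm

lemma continuous_expz : Continuous expz := by
  unfold expz
  exact Complex.continuous_exp.comp (by continuity)

lemma proj_wave {n : ℕ} (y0 : ℝ) (k : V1 n) (x : Fin n → ℝ) :
    Proj y0 (wave k) x = expz (dotn k.1 x) * ∫ y in (0:ℝ)..y0, expz (k.2 * y) := by
  unfold Proj wave
  have h1 : ∀ y : ℝ, expz (dot1 k (x, y)) = expz (dotn k.1 x) * expz (k.2 * y) := by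
    intro y
    rw [← expz_add]; rfl
  simp_rw [h1]
  rw [intervalIntegral.integral_const_mul]

lemma integ_eq_zero_iff {y0 : ℝ} (hy0 : 0 < y0) (κ : ℝ) :
    (∫ y in (0:ℝ)..y0, expz (κ * y)) = 0 ↔ (κ ≠ 0 ∧ ∃ m : ℤ, κ * y0 = (m : ℝ)) := by
  by_cases hκ : κ = 0
  · subst hκ
    simp only [zero_mul]
    have : expz (0:ℝ) = 1 := by simp [expz]
    simp [this, hy0.ne', Complex.ofReal_eq_zero, sub_eq_zero]
  · have hc : (2 * (Real.pi : ℂ) * Complex.I * (κ : ℂ)) ≠ 0 :=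
      mul_ne_zero twoPiI_ne (by exact_mod_cast hκ)
    have h1 : ∀ y : ℝ, expz (κ * y) = Complex.exp ((2 * (Real.pi : ℂ) * Complex.I * (κ : ℂ)) * (y : ℂ)) := by
      intro y
      rw [expz]
      congr 1
      push_cast
      ring
    simp_rw [h1]
    rw [integral_exp_mul_complex hc]
    constructor
    · intro h
      refine ⟨hκ, ?_⟩
      rw [div_eq_zero_iff] at h
      rcases h with h | h
      · rw [sub_eq_zero] at h
        have h2 : expz (κ * y0) = 1 := by
          rw [h1]
          rw [h]
          simp
        exact (expz_eq_one_iff _).mp h2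
      · exact absurd h hc
    · rintro ⟨-, m, hm⟩
      have h2 : Complex.exp (2 * (Real.pi : ℂ) * Complex.I * (κ : ℂ) * (y0 : ℂ)) = 1 := by
        have := expz_int m
        rw [← hm] at this
        rw [h1] at this
        exact this
      rw [h2]
      simp


def condC {n : ℕ} (L : Set (V1 n)) (y0 : ℝ) (v : Fin n → ℝ) : Prop :=
  ∀ k ∈ dualLat L, (∃ m : ℤ, dotn k.1 v = (m : ℝ)) ∨ (k.2 ≠ 0 ∧ ∃ m : ℤ, k.2 * y0 = (m : ℝ))

lemma C_of_H {n : ℕ} {L : Set (V1 n)} {y0 : ℝ} (hy0 : 0 < y0) {v : Fin n → ℝ}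
    (H : ∀ f ∈ XL L, ∀ x : Fin n → ℝ, Proj y0 f (x - v) = Proj y0 f x) :
    condC L y0 v := by
  intro k hk
  by_cases hI : (∫ y in (0:ℝ)..y0, expz (k.2 * y)) = 0
  · exact Or.inr ((integ_eq_zero_iff hy0 k.2).mp hI)
  · left
    have hmem : wave k ∈ XL L := Submodule.subset_span ⟨k, hk, rfl⟩
    have h1 := H (wave k) hmem v
    rw [proj_wave, proj_wave, sub_self,
      show dotn k.1 (0 : Fin n → ℝ) = 0 from dotn_zero_right _,
      show expz (0:ℝ) = 1 by simp [expz], one_mul] at h1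
    have h2 : expz (dotn k.1 v) * (∫ y in (0:ℝ)..y0, expz (k.2 * y))
        = 1 * (∫ y in (0:ℝ)..y0, expz (k.2 * y)) := by rw [one_mul]; exact h1.symm
    exact (expz_eq_one_iff _).mp (mul_right_cancel₀ hI h2)

lemma wave_invariant {n : ℕ} {L : Set (V1 n)} {y0 : ℝ} (hy0 : 0 < y0) {v : Fin n → ℝ}
    (hC : condC L y0 v) {k : V1 n} (hk : k ∈ dualLat L) (x : Fin n → ℝ) :
    Proj y0 (wave k) (x - v) = Proj y0 (wave k) x := by
  rw [proj_wave, proj_wave]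
  rcases hC k hk with ⟨m, hm⟩ | hr
  · rw [dotn_sub_right, hm, expz_sub_int]
  · rw [(integ_eq_zero_iff hy0 k.2).mpr hr, mul_zero, mul_zero]

lemma continuous_wave_y {n : ℕ} (k : V1 n) (x : Fin n → ℝ) :
    Continuous fun y : ℝ => wave k (x, y) := by
  unfold wave
  apply continuous_expz.comp
  show Continuous fun y : ℝ => dotn k.1 x + k.2 * y
  exact continuous_const.add (continuous_const.mul continuous_id)

lemma H_of_C {n : ℕ} {L : Set (V1 n)} {y0 : ℝ} (hy0 : 0 < y0) {v : Fin n → ℝ}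
    (hC : condC L y0 v) :
    ∀ f ∈ XL L, ∀ x : Fin n → ℝ, Proj y0 f (x - v) = Proj y0 f x := by
  intro f hf x
  obtain ⟨c, hsupp, rfl⟩ := Submodule.mem_span_set.mp hf
  have key : ∀ z : Fin n → ℝ,
      Proj y0 (c.sum fun g r => r • g) z = ∑ g ∈ c.support, c g • Proj y0 g z := by
    intro z
    unfold Proj
    rw [Finsupp.sum]
    have hptw : ∀ y : ℝ, (∑ g ∈ c.support, c g • g) (z, y)
        = ∑ g ∈ c.support, c g • g (z, y) := by
      intro y; simp
    simp_rw [hptw]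
    rw [intervalIntegral.integral_finset_sum]
    · exact Finset.sum_congr rfl fun g _ => intervalIntegral.integral_smul _ _
    · intro g hg
      obtain ⟨k, -, rfl⟩ := hsupp hg
      exact ((continuous_wave_y k z).const_smul (c (wave k))).intervalIntegrable _ _
  rw [key, key]
  refine Finset.sum_congr rfl fun g hg => ?_
  obtain ⟨k, hk, rfl⟩ := hsupp hg
  rw [wave_invariant hy0 hC hk]


lemma dualLat_zero {n : ℕ} (L : Set (V1 n)) : (0 : V1 n) ∈ dualLat L := by
  intro l _
  exact ⟨0, by simp [dot1, dotn]⟩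

lemma dualLat_add {n : ℕ} {L : Set (V1 n)} {k k' : V1 n}
    (hk : k ∈ dualLat L) (hk' : k' ∈ dualLat L) : k + k' ∈ dualLat L := by
  intro l hl
  obtain ⟨m, hm⟩ := hk l hl
  obtain ⟨m', hm'⟩ := hk' l hl
  exact ⟨m + m', by rw [dot1_add_left, hm, hm']; push_cast; ring⟩

lemma dualLat_sub_zsmul {n : ℕ} {L : Set (V1 n)} {k k' : V1 n} (j : ℤ)
    (hk : k ∈ dualLat L) (hk' : k' ∈ dualLat L) : k - (j : ℝ) • k' ∈ dualLat L := by
  intro l hl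
  obtain ⟨m, hm⟩ := hk l hl
  obtain ⟨m', hm'⟩ := hk' l hl
  exact ⟨m - j * m', by rw [dot1_sub_left, dot1_smul_left, hm, hm']; push_cast; ring⟩

lemma RHS_of_C {n : ℕ} (b : Fin (n+1) → V1 n) (hb : LinearIndependent ℝ b)
    {y0 : ℝ} (hy0 : 0 < y0) {v : Fin n → ℝ}
    (hC : condC (latticeOf b) y0 v) :
    (((v, (0:ℝ)) : V1 n) ∈ latticeOf b ∨
      ((((0 : Fin n → ℝ), y0) : V1 n) ∈ latticeOf b ∧
        ∃ y1 : ℝ, ((v, y1) : V1 n) ∈ latticeOf b)) := by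
  set L := latticeOf b with hL
  by_cases hA : ∀ k ∈ dualLat L, ∃ m : ℤ, dotn k.1 v = (m : ℝ)
  · left
    apply dual_dual b hb
    intro k hk
    obtain ⟨m, hm⟩ := hA k hk
    exact ⟨m, by rw [show dot1 k ((v, (0:ℝ)) : V1 n) = dotn k.1 v by simp [dot1]]; exact hm⟩
  · right
    have hA' : ∃ k ∈ dualLat L, ¬∃ m : ℤ, dotn k.1 v = (m : ℝ) := by
      push_neg at hA
      obtain ⟨k0, hk0, h⟩ := hA
      exact ⟨k0, hk0, fun ⟨m, hm⟩ => h m hm⟩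
    obtain ⟨k0, hk0, hk0v⟩ := hA'
    obtain ⟨hk02, m0, hm0⟩ := (hC k0 hk0).resolve_left hk0v
    -- all k ∈ L* have k.2 * y0 ∈ ℤ
    have hall : ∀ k ∈ dualLat L, ∃ m : ℤ, k.2 * y0 = (m : ℝ) := by
      intro k hk
      by_cases hkv : ∃ m : ℤ, dotn k.1 v = (m : ℝ)
      · obtain ⟨m, hm⟩ := hkv
        have hsum : ¬ ∃ m' : ℤ, dotn (k + k0).1 v = (m' : ℝ) := by
          rintro ⟨m', hm'⟩
          have hadd : dotn (k + k0).1 v = dotn k.1 v + dotn k0.1 v := by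
            rw [show (k + k0).1 = k.1 + k0.1 from rfl, dotn_add_left]
          rw [hadd, hm] at hm'
          exact hk0v ⟨m' - m, by push_cast; linarith⟩
        obtain ⟨-, ms, hms⟩ := (hC (k + k0) (dualLat_add hk hk0)).resolve_left hsum
        refine ⟨ms - m0, ?_⟩
        have : (k + k0).2 = k.2 + k0.2 := rfl
        rw [this, add_mul, hm0] at hms
        push_cast
        linarith
      · obtain ⟨-, m, hm⟩ := (hC k hk).resolve_left hkv
        exact ⟨m, hm⟩
    have h0y0 : (((0 : Fin n → ℝ), y0) : V1 n) ∈ L := by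
      apply dual_dual b hb
      intro k hk
      obtain ⟨m, hm⟩ := hall k hk
      exact ⟨m, by rw [show dot1 k (((0 : Fin n → ℝ), y0) : V1 n) = k.2 * y0 by
        simp [dot1, dotn_zero_right]]; exact hm⟩
    refine ⟨h0y0, ?_⟩
    -- the subgroup T of ℤ
    let T : AddSubgroup ℤ :=
      { carrier := {m : ℤ | ∃ k ∈ dualLat L, k.2 * y0 = (m : ℝ)}
        zero_mem' := ⟨0, dualLat_zero L, by simp⟩
        add_mem' := by
          rintro a a' ⟨k, hk, ha⟩ ⟨k', hk', ha'⟩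
          refine ⟨k + k', dualLat_add hk hk', ?_⟩
          rw [show (k + k').2 = k.2 + k'.2 from rfl, add_mul, ha, ha']
          push_cast; ring
        neg_mem' := by
          rintro a ⟨k, hk, ha⟩
          refine ⟨(0 : V1 n) - ((1 : ℤ) : ℝ) • k, dualLat_sub_zsmul 1 (dualLat_zero L) hk, ?_⟩
          rw [show ((0 : V1 n) - ((1 : ℤ) : ℝ) • k).2 = -k.2 by simp, neg_mul, ha]
          push_cast; ring }
    obtain ⟨g, hg⟩ := Int.subgroup_cyclic T
    have hm0T : m0 ∈ T := ⟨k0, hk0, hm0⟩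
    have hm0ne : m0 ≠ 0 := by
      rintro rfl
      apply hk02
      have : k0.2 * y0 = 0 := by rw [hm0]; simp
      rcases mul_eq_zero.mp this with h | h
      · exact h
      · exact absurd h hy0.ne'
    have hgne : g ≠ 0 := by
      rintro rfl
      rw [hg, AddSubgroup.mem_closure_singleton] at hm0T
      obtain ⟨j, hj⟩ := hm0T
      simp at hj
      exact hm0ne hj.symm
    have hgT : g ∈ T := by
      rw [hg]
      exact AddSubgroup.mem_closure_singleton.mpr ⟨1, one_smul _ _⟩
    obtain ⟨k1, hk1, hk1g⟩ := hgT
    have hk12ne : k1.2 ≠ 0 := by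
      intro h
      rw [h, zero_mul] at hk1g
      exact hgne (by exact_mod_cast hk1g.symm)
    refine ⟨-(dotn k1.1 v) / k1.2, ?_⟩
    apply dual_dual b hb
    intro k hk
    obtain ⟨m, hm⟩ := hall k hk
    have hmT : m ∈ T := ⟨k, hk, hm⟩
    rw [hg, AddSubgroup.mem_closure_singleton] at hmT
    obtain ⟨j, hj⟩ := hmT
    have hjg : m = j * g := by rw [← hj]; simp [smul_eq_mul]
    -- k.2 = j * k1.2
    have hk2 : k.2 = (j : ℝ) * k1.2 := by
      have h1 : k.2 * y0 = ((j : ℝ) * k1.2) * y0 := by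
        rw [hm, hjg, mul_assoc, hk1g]; push_cast; ring
      exact mul_right_cancel₀ hy0.ne' h1
    set k' : V1 n := k - (j : ℝ) • k1 with hk'
    have hk'mem : k' ∈ dualLat L := dualLat_sub_zsmul j hk hk1
    have hk'2 : k'.2 = 0 := by
      rw [hk', show (k - (j : ℝ) • k1).2 = k.2 - (j : ℝ) * k1.2 from rfl, hk2]
      ring
    have hk'v : ∃ m' : ℤ, dotn k'.1 v = (m' : ℝ) := by
      rcases hC k' hk'mem with h | ⟨h2, -⟩
      · exact h
      · exact absurd hk'2 h2
    obtain ⟨m', hm'⟩ := hk'v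
    refine ⟨m', ?_⟩
    have hsplit : dotn k.1 v = dotn k'.1 v + (j : ℝ) * dotn k1.1 v := by
      rw [hk', show (k - (j : ℝ) • k1).1 = k.1 - (j : ℝ) • k1.1 from rfl,
        dotn_sub_left, dotn_smul_left]
      ring
    show dotn k.1 v + k.2 * (-(dotn k1.1 v) / k1.2) = (m' : ℝ)
    rw [hsplit, hk2, hm']
    field_simp
    ring

lemma C_of_RHS {n : ℕ} (b : Fin (n+1) → V1 n) {y0 : ℝ} {v : Fin n → ℝ}
    (h : (((v, (0:ℝ)) : V1 n) ∈ latticeOf b ∨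
      ((((0 : Fin n → ℝ), y0) : V1 n) ∈ latticeOf b ∧
        ∃ y1 : ℝ, ((v, y1) : V1 n) ∈ latticeOf b))) :
    condC (latticeOf b) y0 v := by
  intro k hk
  rcases h with h | ⟨h0, y1, h1⟩
  · obtain ⟨m, hm⟩ := hk _ h
    left
    exact ⟨m, by rw [show dot1 k ((v, (0:ℝ)) : V1 n) = dotn k.1 v by simp [dot1]] at hm; exact hm⟩
  · by_cases hk2 : k.2 = 0
    · left
      obtain ⟨m, hm⟩ := hk _ h1
      refine ⟨m, ?_⟩
      rw [show dot1 k ((v, y1) : V1 n) = dotn k.1 v + k.2 * y1 from rfl, hk2] at hm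
      linarith [hm]
    · right
      obtain ⟨m, hm⟩ := hk _ h0
      refine ⟨hk2, m, ?_⟩
      rw [show dot1 k (((0 : Fin n → ℝ), y0) : V1 n) = k.2 * y0 by
        simp [dot1, dotn_zero_right]] at hm
      exact hm

end Aux

/-- every function in `Π_{y0}(𝒳_ℒ)` is invariant under translation by `v`
iff `(v,0) ∈ ℒ`, or `(0,y0) ∈ ℒ` and `(v,y1) ∈ ℒ` for some `y1`. -/
theorem stmt_1 (n : ℕ) (hn : 1 ≤ n) (b : Fin (n+1) → V1 n) (hb : LinearIndependent ℝ b)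
    (y0 : ℝ) (hy0 : 0 < y0) (v : Fin n → ℝ) :
    (∀ f ∈ XL (latticeOf b), ∀ x : Fin n → ℝ, Proj y0 f (x - v) = Proj y0 f x) ↔
      (((v, (0:ℝ)) : V1 n) ∈ latticeOf b ∨
        ((((0 : Fin n → ℝ), y0) : V1 n) ∈ latticeOf b ∧
          ∃ y1 : ℝ, ((v, y1) : V1 n) ∈ latticeOf b)) := by
  constructor
  · intro H
    exact Aux.RHS_of_C b hb hy0 (Aux.C_of_H hy0 H)
  · intro h
    exact Aux.H_of_C hy0 (Aux.C_of_RHS b h)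

end
end

section
/- Let ℒ ⊂ ℝ^{n+1} be a lattice and y0 > 0. Let 𝓛̃ = P(ℒ) if (0,y0) ∈ ℒ, and 𝓛̃ = P(ℒ ∩ (ℝ^n × {0})) otherwise; let 𝓛̃* = {k̃ ∈ ℝ^n : ⟨k̃,v⟩ ∈ ℤ for all v ∈ 𝓛̃}, and let 𝒳_𝓛̃ be the ℂ-linear span of {ω_{k̃} : k̃ ∈ 𝓛̃*}. Then Π_{y0}(𝒳_ℒ) = 𝒳_𝓛̃ if and only if for each k̃ ∈ 𝓛̃* there exists z ∈ ℝ such that (k̃, z) ∈ ℒ* and z·y0 ∉ ℤ \ {0}. -/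
open MeasureTheory
open scoped Classical

noncomputable section

-- helpers
lemma expz_add (s t : ℝ) : expz (s + t) = expz s * expz t := by
  unfold expz
  rw [← Complex.exp_add]
  push_cast
  ring_nf

lemma expz_zero : expz 0 = 1 := by simp [expz]

lemma expz_ne_zero (t : ℝ) : expz t ≠ 0 := Complex.exp_ne_zero _

lemma two_pi_I_ne_zero : (2 * (Real.pi : ℂ) * Complex.I) ≠ 0 := by
  simp [Complex.I_ne_zero, Real.pi_ne_zero, Complex.ofReal_ne_zero]

lemma expz_eq_one_iff (t : ℝ) : expz t = 1 ↔ ∃ m : ℤ, t = (m : ℝ) := by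
  unfold expz
  rw [Complex.exp_eq_one_iff]
  constructor
  · rintro ⟨m, hm⟩
    refine ⟨m, ?_⟩
    have : (t : ℂ) = (m : ℂ) := by
      apply mul_left_cancel₀ two_pi_I_ne_zero
      rw [hm]; ring
    exact_mod_cast this
  · rintro ⟨m, hm⟩
    exact ⟨m, by rw [hm]; push_cast; ring⟩

def czv (y0 z : ℝ) : ℂ :=
  if z = 0 then (y0 : ℂ) else (expz (z * y0) - 1) / (2 * (Real.pi : ℂ) * Complex.I * z)

lemma integral_expz (y0 z : ℝ) : (∫ y in (0:ℝ)..y0, expz (z * y)) = czv y0 z := by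
  unfold czv
  by_cases hz : z = 0
  · simp [hz, expz_zero, expz]
  · have hc : (2 * (Real.pi : ℂ) * Complex.I * z) ≠ 0 := by
      exact mul_ne_zero two_pi_I_ne_zero (by exact_mod_cast hz)
    have : ∀ y : ℝ, expz (z * y) = Complex.exp ((2 * (Real.pi : ℂ) * Complex.I * z) * y) := by
      intro y; unfold expz; push_cast; ring_nf
    simp only [this]
    rw [integral_exp_mul_complex hc]
    rw [if_neg hz]
    simp only [Complex.ofReal_zero, mul_zero, Complex.exp_zero]

lemma czv_ne_zero_iff {y0 : ℝ} (hy0 : 0 < y0) (z : ℝ) :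
    czv y0 z ≠ 0 ↔ ∀ m : ℤ, z * y0 = (m : ℝ) → m = 0 := by
  unfold czv
  by_cases hz : z = 0
  · simp only [hz, if_pos rfl]
    constructor
    · intro _ m hm
      have : (m : ℝ) = 0 := by linarith [hm.symm.trans (by ring : (0:ℝ) * y0 = 0)]
      exact_mod_cast this
    · intro _
      simpa using hy0.ne'
  · simp only [if_neg hz]
    have hc : (2 * (Real.pi : ℂ) * Complex.I * z) ≠ 0 :=
      mul_ne_zero two_pi_I_ne_zero (by exact_mod_cast hz)
    rw [div_ne_zero_iff]
    constructor
    · rintro ⟨h1, _⟩ m hm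
      exfalso
      apply h1
      rw [sub_eq_zero, expz_eq_one_iff]
      exact ⟨m, hm⟩
    · intro h
      refine ⟨?_, hc⟩
      rw [sub_ne_zero]
      intro h1
      rw [expz_eq_one_iff] at h1
      obtain ⟨m, hm⟩ := h1
      have hm0 : m = 0 := h m hm
      rw [hm0] at hm
      simp at hm
      rcases hm with h | h
      · exact hz h
      · exact hy0.ne' h

lemma cont_wave_y {n : ℕ} (k : V1 n) (x : Fin n → ℝ) :
    Continuous fun y : ℝ => wave k (x, y) := by
  show Continuous fun y : ℝ => expz (dotn k.1 x + k.2 * y)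
  unfold expz
  fun_prop

lemma wave_intInt {n : ℕ} (k : V1 n) (x : Fin n → ℝ) (y0 : ℝ) :
    IntervalIntegrable (fun y => wave k (x, y)) volume 0 y0 :=
  (cont_wave_y k x).intervalIntegrable _ _

lemma proj_wave {n : ℕ} (y0 : ℝ) (k : V1 n) :
    Proj y0 (wave k) = czv y0 k.2 • waveN k.1 := by
  funext x
  have : ∀ y : ℝ, wave k (x, y) = waveN k.1 x * expz (k.2 * y) := by
    intro y
    unfold wave waveN dot1
    rw [← expz_add]
  simp only [Proj, this]
  rw [intervalIntegral.integral_const_mul, integral_expz]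
  simp [mul_comm]

end

noncomputable section

lemma dotn_add_right {n : ℕ} (u a b : Fin n → ℝ) : dotn u (a + b) = dotn u a + dotn u b := by
  simp [dotn, mul_add, Finset.sum_add_distrib]

lemma dotn_single {n : ℕ} (u : Fin n → ℝ) (i : Fin n) (t : ℝ) :
    dotn u (Pi.single i t) = u i * t := by
  simp [dotn, Pi.single_apply, mul_ite, Finset.sum_ite_eq']

lemma dual_proj {n : ℕ} {L : Set (V1 n)} {y0 : ℝ} (hy0 : 0 < y0) {kt : Fin n → ℝ} {z : ℝ}
    (hk : ((kt, z) : V1 n) ∈ dualLat L) (hg : ∀ m : ℤ, z * y0 = (m : ℝ) → m = 0) :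
    kt ∈ dualN (projLat L y0) := by
  intro v hv
  unfold projLat at hv
  split_ifs at hv with h0
  · obtain ⟨⟨v', w⟩, hvL, rfl⟩ := hv
    have hz : z = 0 := by
      obtain ⟨m, hm⟩ := hk _ h0
      have hd : dot1 ((kt, z) : V1 n) ((0 : Fin n → ℝ), y0) = z * y0 := by
        simp [dot1, dotn]
      rw [hd] at hm
      have hm0 := hg m hm
      rw [hm0] at hm
      simp only [Int.cast_zero] at hm
      rcases mul_eq_zero.1 hm with h | h
      · exact h
      · exact absurd h hy0.ne'
    obtain ⟨m, hm⟩ := hk _ hvL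
    refine ⟨m, ?_⟩
    rw [← hm]
    simp [dot1, hz]
  · obtain ⟨⟨v', w⟩, ⟨hvL, hw⟩, rfl⟩ := hv
    have hw0 : w = 0 := hw
    obtain ⟨m, hm⟩ := hk _ hvL
    refine ⟨m, ?_⟩
    rw [← hm]
    simp [dot1, hw0]

def charHom {n : ℕ} (u : Fin n → ℝ) : Multiplicative (Fin n → ℝ) →* ℂ where
  toFun x := expz (dotn u x.toAdd)
  map_one' := by
    show expz (dotn u 0) = 1
    simp [dotn, expz_zero]
  map_mul' x y := by
    show expz (dotn u (x.toAdd + y.toAdd)) = _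
    rw [dotn_add_right, expz_add]

lemma expz_eq_iff (s t : ℝ) : expz s = expz t ↔ ∃ m : ℤ, s - t = (m : ℝ) := by
  have h := expz_add (s - t) t
  simp only [sub_add_cancel] at h
  constructor
  · intro he
    have : expz (s - t) = 1 := by
      have h1 : expz (s - t) * expz t = 1 * expz t := by
        rw [one_mul, ← h, he]
      exact mul_right_cancel₀ (expz_ne_zero t) h1
    exact (expz_eq_one_iff _).1 this
  · rintro ⟨m, hm⟩
    rw [h, hm, (expz_eq_one_iff _).2 ⟨m, rfl⟩, one_mul]

lemma charHom_inj {n : ℕ} : Function.Injective (charHom (n := n)) := by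
  intro u u' h
  funext i
  by_contra hne
  have hd : u i - u' i ≠ 0 := sub_ne_zero.2 hne
  have key : ∀ t : ℝ, expz (dotn u (Pi.single i t)) = expz (dotn u' (Pi.single i t)) := by
    intro t
    exact congrFun (congrArg (fun f : Multiplicative (Fin n → ℝ) →* ℂ => (f : Multiplicative (Fin n → ℝ) → ℂ)) h)
      (Multiplicative.ofAdd (Pi.single i t))
  have key2 : ∀ t : ℝ, ∃ m : ℤ, u i * t - u' i * t = (m : ℝ) := by
    intro t
    have := key t
    rw [dotn_single, dotn_single] at this
    exact (expz_eq_iff _ _).1 this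
  obtain ⟨m, hm⟩ := key2 (1 / (2 * (u i - u' i)))
  have : (m : ℝ) = 1 / 2 := by
    rw [← hm]
    field_simp
  have h2 : ((2 * m : ℤ) : ℝ) = 1 := by push_cast; linarith
  have : (2 * m : ℤ) = 1 := by exact_mod_cast h2
  omega

lemma waveN_li {n : ℕ} : LinearIndependent ℂ (waveN (n := n)) :=
  (linearIndependent_monoidHom (Multiplicative (Fin n → ℝ)) ℂ).comp charHom charHom_inj

lemma proj_XL_mem {n : ℕ} {L : Set (V1 n)} (y0 : ℝ) {f : V1 n → ℂ} (hf : f ∈ XL L) :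
    (∀ x, IntervalIntegrable (fun y => f (x, y)) volume 0 y0) ∧
    Proj y0 f ∈ Submodule.span ℂ
      (waveN '' {u : Fin n → ℝ | ∃ z : ℝ, ((u, z) : V1 n) ∈ dualLat L ∧ czv y0 z ≠ 0}) := by
  induction hf using Submodule.span_induction with
  | mem g hg =>
      obtain ⟨k, hk, rfl⟩ := hg
      refine ⟨fun x => wave_intInt k x y0, ?_⟩
      rw [proj_wave]
      by_cases hc : czv y0 k.2 = 0
      · rw [hc, zero_smul]; exact Submodule.zero_mem _
      · exact Submodule.smul_mem _ _ (Submodule.subset_span ⟨k.1, ⟨k.2, hk, hc⟩, rfl⟩)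
  | zero =>
      refine ⟨fun x => ?_, ?_⟩
      · simpa using intervalIntegrable_const (c := (0 : ℂ)) (μ := volume) (a := (0:ℝ)) (b := y0)
      · have : Proj y0 (0 : V1 n → ℂ) = 0 := by
          funext x; simp [Proj]
        rw [this]; exact Submodule.zero_mem _
  | add g h hg hh ihg ihh =>
      refine ⟨fun x => (ihg.1 x).add (ihh.1 x), ?_⟩
      have : Proj y0 (g + h) = Proj y0 g + Proj y0 h := by
        funext x
        simp only [Proj, Pi.add_apply]
        exact intervalIntegral.integral_add (ihg.1 x) (ihh.1 x)
      rw [this]; exact Submodule.add_mem _ ihg.2 ihh.2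
  | smul a g hg ihg =>
      refine ⟨fun x => ?_, ?_⟩
      · have := (ihg.1 x).const_mul a
        simpa [Pi.smul_apply, smul_eq_mul] using this
      · have : Proj y0 (a • g) = a • Proj y0 g := by
          funext x
          simp only [Proj, Pi.smul_apply, smul_eq_mul]
          rw [intervalIntegral.integral_const_mul]
        rw [this]; exact Submodule.smul_mem _ _ ihg.2


theorem aux_stmt5 {n : ℕ} (y0 : ℝ) (hy0 : 0 < y0) (L : Set (V1 n)) :
    Proj y0 '' (XL L : Set (V1 n → ℂ)) =
        (XN (projLat L y0) : Set ((Fin n → ℝ) → ℂ)) ↔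
      ∀ kt ∈ dualN (projLat L y0),
        ∃ z : ℝ, ((kt, z) : V1 n) ∈ dualLat L ∧
          ∀ m : ℤ, z * y0 = (m : ℝ) → m = 0 := by
  constructor
  · intro hEq kt hkt
    have h1 : waveN kt ∈ (XN (projLat L y0) : Set ((Fin n → ℝ) → ℂ)) :=
      Submodule.subset_span (Set.mem_image_of_mem _ hkt)
    rw [← hEq] at h1
    obtain ⟨f, hfXL, hproj⟩ := h1
    have h2 := (proj_XL_mem y0 hfXL).2
    rw [hproj] at h2
    by_contra hcon
    have hnot : kt ∉ {u : Fin n → ℝ | ∃ z : ℝ, ((u, z) : V1 n) ∈ dualLat L ∧ czv y0 z ≠ 0} := by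
      rintro ⟨z, hz, hc⟩
      exact hcon ⟨z, hz, (czv_ne_zero_iff hy0 z).1 hc⟩
    exact (waveN_li.notMem_span_image hnot) h2
  · intro hA
    apply Set.Subset.antisymm
    · rintro _ ⟨f, hf, rfl⟩
      have h2 := (proj_XL_mem y0 hf).2
      refine Submodule.span_le.2 ?_ h2
      rintro _ ⟨u, ⟨z, hz, hc⟩, rfl⟩
      exact Submodule.subset_span
        ⟨u, dual_proj hy0 hz ((czv_ne_zero_iff hy0 z).1 hc), rfl⟩
    · intro h hh
      have hh' : h ∈ Submodule.span ℂ (waveN '' dualN (projLat L y0)) := hh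
      rw [Submodule.mem_span_set] at hh'
      obtain ⟨c, hsupp, hsum⟩ := hh'
      have hch : ∀ g ∈ c.support, ∃ k : V1 n, k ∈ dualLat L ∧ czv y0 k.2 ≠ 0 ∧ g = waveN k.1 := by
        intro g hg
        obtain ⟨u, hu, rfl⟩ := hsupp hg
        obtain ⟨z, hz, hzg⟩ := hA u hu
        exact ⟨(u, z), hz, (czv_ne_zero_iff hy0 z).2 hzg, rfl⟩
      choose K hK1 hK2 hK3 using hch
      refine ⟨∑ g ∈ c.support.attach, (c g / czv y0 (K g g.2).2) • wave (K g g.2), ?_, ?_⟩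
      · exact Submodule.sum_mem _ fun g _ =>
          Submodule.smul_mem _ _ (Submodule.subset_span ⟨K g g.2, hK1 g g.2, rfl⟩)
      · have step1 : Proj y0 (∑ g ∈ c.support.attach,
            (c g / czv y0 (K g g.2).2) • wave (K g g.2))
            = ∑ g ∈ c.support.attach,
              (c g / czv y0 (K g g.2).2) • Proj y0 (wave (K g g.2)) := by
          funext x
          simp only [Proj, Finset.sum_apply, Pi.smul_apply, smul_eq_mul]
          rw [intervalIntegral.integral_finset_sum
            (fun (g : {x // x ∈ c.support}) _ => (wave_intInt (K g g.2) x y0).const_mul _)]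
          exact Finset.sum_congr rfl fun g _ => intervalIntegral.integral_const_mul _ _
        rw [step1]
        have step2 : ∀ g ∈ c.support.attach,
            (c g / czv y0 (K g g.2).2) • Proj y0 (wave (K g g.2)) = c g • (g : (Fin n → ℝ) → ℂ) := by
          intro g _
          rw [proj_wave, smul_smul, div_mul_cancel₀ _ (hK2 g g.2), ← hK3 g g.2]
        rw [Finset.sum_congr rfl step2, ← hsum]
        rw [Finsupp.sum]
        exact Finset.sum_attach c.support (fun a => c a • a)


/-- `Π_{y0}(𝒳_ℒ) = 𝒳_𝓛̃` iff for each `k̃ ∈ 𝓛̃*` there is `z` with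
`(k̃,z) ∈ ℒ*` and `z·y0 ∉ ℤ \ {0}`. -/
theorem stmt_5 (n : ℕ) (hn : 1 ≤ n) (b : Fin (n+1) → V1 n) (hb : LinearIndependent ℝ b)
    (y0 : ℝ) (hy0 : 0 < y0) :
    Proj y0 '' (XL (latticeOf b) : Set (V1 n → ℂ)) =
        (XN (projLat (latticeOf b) y0) : Set ((Fin n → ℝ) → ℂ)) ↔
      ∀ kt ∈ dualN (projLat (latticeOf b) y0),
        ∃ z : ℝ, ((kt, z) : V1 n) ∈ dualLat (latticeOf b) ∧
          ∀ m : ℤ, z * y0 = (m : ℝ) → m = 0 := by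
  exact aux_stmt5 y0 hy0 (latticeOf b)

end
end

section
/- Let ℒ ⊂ ℝ^{n+1} be a lattice, y0 > 0, and k ∈ ℒ*. Let δ ∈ H_ℒ, α ∈ J̃, and let γ ∈ H_ℒ be equal to α_+ or to α_−. If γδ ∈ S_k then δ ∈ S_k. -/
open MeasureTheory
open scoped Classical

noncomputable section

lemma holL_mul {n : ℕ} {L : Set (V1 n)} {γ δ : V1 n ≃ₗ[ℝ] V1 n}
    (hγ : γ ∈ HolL L) (hδ : δ ∈ HolL L) : γ * δ ∈ HolL L := by
  obtain ⟨hγo, hγL⟩ := hγ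
  obtain ⟨hδo, hδL⟩ := hδ
  refine ⟨fun a b => ?_, ?_⟩
  · show dot1 (γ (δ a)) (γ (δ b)) = dot1 a b
    rw [hγo, hδo]
  · show (⇑γ ∘ ⇑δ) '' L = L
    rw [Set.image_comp, hδL, hγL]

lemma holL_inv {n : ℕ} {L : Set (V1 n)} {γ : V1 n ≃ₗ[ℝ] V1 n}
    (hγ : γ ∈ HolL L) : γ.symm ∈ HolL L := by
  obtain ⟨hγo, hγL⟩ := hγ
  refine ⟨fun a b => ?_, ?_⟩
  · have := hγo (γ.symm a) (γ.symm b)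
    simp only [LinearEquiv.apply_symm_apply] at this; exact this.symm
  · conv_lhs => rw [← hγL]
    rw [← Set.image_comp]
    simp

lemma aPlus_symm {n : ℕ} (α : (Fin n → ℝ) ≃ₗ[ℝ] (Fin n → ℝ)) :
    aPlus α.symm = (aPlus α).symm := by
  apply LinearEquiv.toLinearMap_injective
  ext p <;> rfl

lemma aMinus_symm {n : ℕ} (α : (Fin n → ℝ) ≃ₗ[ℝ] (Fin n → ℝ)) :
    aMinus α.symm = (aMinus α).symm := by
  apply LinearEquiv.toLinearMap_injective
  ext p <;> rfl

lemma aPlus_comp_plus {n : ℕ} (α β : (Fin n → ℝ) ≃ₗ[ℝ] (Fin n → ℝ)) :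
    aPlus (α * β) = aPlus α * aPlus β := by
  apply LinearEquiv.toLinearMap_injective
  ext p <;> rfl

lemma aMinus_comp {n : ℕ} (α β : (Fin n → ℝ) ≃ₗ[ℝ] (Fin n → ℝ)) :
    aMinus (α * β) = aPlus α * aMinus β := by
  apply LinearEquiv.toLinearMap_injective
  ext p <;> rfl

lemma aMinus_comp' {n : ℕ} (α β : (Fin n → ℝ) ≃ₗ[ℝ] (Fin n → ℝ)) :
    aMinus (α * β) = aMinus α * aPlus β := by
  apply LinearEquiv.toLinearMap_injective
  ext p <;> rfl

lemma aPlus_of_minus_minus {n : ℕ} (α β : (Fin n → ℝ) ≃ₗ[ℝ] (Fin n → ℝ)) :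
    aPlus (α * β) = aMinus α * aMinus β := by
  apply LinearEquiv.toLinearMap_injective
  ext p
  · rfl
  · show (0:ℝ) = - - 0; simp
  · rfl
  · show (1:ℝ) = - - 1; simp

lemma isOrthoN_symm {n : ℕ} {α : (Fin n → ℝ) ≃ₗ[ℝ] (Fin n → ℝ)}
    (h : IsOrthoN α) : IsOrthoN α.symm := fun a b => by
  have := h (α.symm a) (α.symm b); simp only [LinearEquiv.apply_symm_apply] at this; exact this.symm

lemma isOrthoN_mul {n : ℕ} {α β : (Fin n → ℝ) ≃ₗ[ℝ] (Fin n → ℝ)}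
    (hα : IsOrthoN α) (hβ : IsOrthoN β) : IsOrthoN (α * β) := fun a b => by
  show dotn (α (β a)) (α (β b)) = _
  rw [hα, hβ]

/-- if `γ ∈ H_ℒ` equals `α₊` or `α₋` for some `α ∈ J̃`, and `γδ ∈ S_k`,
then `δ ∈ S_k`. -/
theorem stmt_12 (n : ℕ) (hn : 1 ≤ n) (b : Fin (n+1) → V1 n) (hb : LinearIndependent ℝ b)
    (y0 : ℝ) (hy0 : 0 < y0) (k : V1 n) (hk : k ∈ dualLat (latticeOf b))
    (δ : V1 n ≃ₗ[ℝ] V1 n) (hδ : δ ∈ HolL (latticeOf b))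
    (α : (Fin n → ℝ) ≃ₗ[ℝ] (Fin n → ℝ)) (hα : α ∈ Jt (latticeOf b) y0)
    (γ : V1 n ≃ₗ[ℝ] V1 n) (hγ : γ ∈ HolL (latticeOf b))
    (hγeq : γ = aPlus α ∨ γ = aMinus α)
    (hmem : γ * δ ∈ Sk (latticeOf b) y0 k) :
    δ ∈ Sk (latticeOf b) y0 k := by
  set L := latticeOf b
  obtain ⟨hαo, hαH⟩ := hα
  -- extract β from hmem
  rw [Sk, Set.mem_iUnion₂] at hmem
  obtain ⟨β, hβJ, hβmem⟩ := hmem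
  obtain ⟨hβo, hβH⟩ := hβJ
  obtain ⟨_, hproj⟩ := hβmem
  -- (γ x).1 = α x.1 in both cases
  have hγ1 : ∀ x : V1 n, (γ x).1 = α x.1 := by
    rcases hγeq with rfl | rfl <;> intro x <;> rfl
  have hδk : (δ k).1 = (α.symm * β) k.1 := by
    have : α ((δ k).1) = β k.1 := by
      have h1 : ((γ * δ) k).1 = β k.1 := hproj
      have h2 : ((γ * δ) k).1 = α ((δ k).1) := hγ1 (δ k)
      rw [← h1, h2]
    show (δ k).1 = α.symm (β k.1)
    rw [← this]; simp
  -- show σ := α.symm * β ∈ Jt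
  rw [Sk, Set.mem_iUnion₂]
  refine ⟨α.symm * β, ⟨isOrthoN_mul (isOrthoN_symm hαo) hβo, ?_⟩, hδ, hδk⟩
  rcases hγeq with rfl | rfl
  · -- γ = aPlus α, so aPlus α ∈ H, (aPlus α).symm ∈ H
    have hαinv : aPlus α.symm ∈ HolL L := by
      rw [aPlus_symm]; exact holL_inv hγ
    rcases hβH with hβp | ⟨h0, hβm⟩
    · left; rw [aPlus_comp_plus]; exact holL_mul hαinv hβp
    · right; exact ⟨h0, by rw [aMinus_comp]; exact holL_mul hαinv hβm⟩
  · -- γ = aMinus α ∈ H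
    have hαminv : aMinus α.symm ∈ HolL L := by
      rw [aMinus_symm]; exact holL_inv hγ
    rcases hβH with hβp | ⟨h0, hβm⟩
    · -- need σ₋ ∈ H with (0,y0) ∈ L, or σ₊ ∈ H via hαH
      rcases hαH with hαp | ⟨h0, hαm⟩
      · left
        have hαpinv : aPlus α.symm ∈ HolL L := by
          rw [aPlus_symm]; exact holL_inv hαp
        rw [aPlus_comp_plus]; exact holL_mul hαpinv hβp
      · right
        exact ⟨h0, by rw [aMinus_comp']; exact holL_mul hαminv hβp⟩
    · left
      rw [aPlus_of_minus_minus]; exact holL_mul hαminv hβm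

end
end

section
/- Let ℒ ⊂ ℝ^{n+1} be a lattice, y0 > 0, and k ∈ ℒ*. Then there exist r ≥ 1 and elements δ_1 = id, δ_2, …, δ_r ∈ H_ℒ such that the sets S_{δ_i k}·(δ_i k) = {σ(δ_i k) : σ ∈ S_{δ_i k}} for i = 1,…,r are pairwise disjoint with union equal to the orbit H_ℒ·k = {δk : δ ∈ H_ℒ}; consequently the J̃-orbits J̃·P(δ_i k) for i = 1,…,r are pairwise disjoint and their union equals P(H_ℒ·k), so that P(H_ℒ·k) is a disjoint union of J̃-orbits. -/
open MeasureTheory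
open scoped Classical

noncomputable section

namespace Stmt13

variable {n : ℕ}

lemma dot1_sub_left (a b c : V1 n) : dot1 (a - b) c = dot1 a c - dot1 b c := by
  simp only [dot1, dotn, Prod.fst_sub, Prod.snd_sub, Pi.sub_apply, sub_mul,
    Finset.sum_sub_distrib]
  ring

lemma dot1_add_right (u a c : V1 n) : dot1 u (a + c) = dot1 u a + dot1 u c := by
  simp only [dot1, dotn, Prod.fst_add, Prod.snd_add, Pi.add_apply, mul_add,
    Finset.sum_add_distrib]
  ring

lemma dot1_smul_right (u : V1 n) (r : ℝ) (a : V1 n) : dot1 u (r • a) = r * dot1 u a := by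
  simp only [dot1, dotn, Prod.smul_fst, Prod.smul_snd, Pi.smul_apply, smul_eq_mul,
    mul_add, Finset.mul_sum]
  congr 1
  · exact Finset.sum_congr rfl fun i _ => by ring
  · ring

/-- dot product with `u` on the left, as a linear map in the right argument. -/
def dotR (u : V1 n) : V1 n →ₗ[ℝ] ℝ where
  toFun := dot1 u
  map_add' := dot1_add_right u
  map_smul' r a := by simpa using dot1_smul_right u r a

@[simp] lemma dotR_apply (u x : V1 n) : dotR u x = dot1 u x := rfl

lemma sq_fst_le (x : V1 n) (j : Fin n) : x.1 j * x.1 j ≤ dot1 x x := by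
  have h1 : x.1 j * x.1 j ≤ ∑ i, x.1 i * x.1 i :=
    Finset.single_le_sum (f := fun i => x.1 i * x.1 i)
      (fun i _ => mul_self_nonneg _) (Finset.mem_univ j)
  have h2 := mul_self_nonneg x.2
  show x.1 j * x.1 j ≤ (∑ i, x.1 i * x.1 i) + x.2 * x.2
  linarith

lemma sq_snd_le (x : V1 n) : x.2 * x.2 ≤ dot1 x x := by
  have h1 : (0:ℝ) ≤ ∑ i, x.1 i * x.1 i :=
    Finset.sum_nonneg (fun i _ => mul_self_nonneg _)
  show x.2 * x.2 ≤ (∑ i, x.1 i * x.1 i) + x.2 * x.2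
  linarith

lemma dot1_self_eq_zero {x : V1 n} (h : dot1 x x = 0) : x = 0 := by
  have hd : dot1 x x = (∑ i, x.1 i * x.1 i) + x.2 * x.2 := rfl
  have hs : (0:ℝ) ≤ ∑ i, x.1 i * x.1 i :=
    Finset.sum_nonneg (fun i _ => mul_self_nonneg _)
  have h2 := mul_self_nonneg x.2
  rw [hd] at h
  have h1 : (∑ i, x.1 i * x.1 i) = 0 := by linarith
  have h2' : x.2 * x.2 = 0 := by linarith
  have hfst : x.1 = 0 := by
    funext i
    have := (Finset.sum_eq_zero_iff_of_nonneg (fun i _ => mul_self_nonneg (x.1 i))).mp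
      h1 i (Finset.mem_univ i)
    exact mul_self_eq_zero.mp this
  have hsnd : x.2 = 0 := mul_self_eq_zero.mp h2'
  exact Prod.ext hfst hsnd

/-! ### Group structure of the holohedry -/

lemma holL_one (L : Set (V1 n)) : (1 : V1 n ≃ₗ[ℝ] V1 n) ∈ HolL L := by
  constructor
  · intro a b; rfl
  · have : ⇑(1 : V1 n ≃ₗ[ℝ] V1 n) = id := rfl
    rw [this, Set.image_id]

lemma holL_mul {L : Set (V1 n)} {γ₁ γ₂ : V1 n ≃ₗ[ℝ] V1 n}
    (h₁ : γ₁ ∈ HolL L) (h₂ : γ₂ ∈ HolL L) : γ₁ * γ₂ ∈ HolL L := by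
  refine ⟨fun a c => ?_, ?_⟩
  · show dot1 (γ₁ (γ₂ a)) (γ₁ (γ₂ c)) = dot1 a c
    rw [h₁.1, h₂.1]
  · show (⇑γ₁ ∘ ⇑γ₂) '' L = L
    rw [Set.image_comp, h₂.2, h₁.2]

lemma holL_inv {L : Set (V1 n)} {γ : V1 n ≃ₗ[ℝ] V1 n} (h : γ ∈ HolL L) : γ⁻¹ ∈ HolL L := by
  refine ⟨fun a c => ?_, ?_⟩
  · have h2 := h.1 (γ⁻¹ a) (γ⁻¹ c)
    rw [show γ (γ⁻¹ a) = a from γ.apply_symm_apply a,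
      show γ (γ⁻¹ c) = c from γ.apply_symm_apply c] at h2
    exact h2.symm
  · conv_lhs => rw [← h.2]
    rw [← Set.image_comp]
    have : ⇑γ⁻¹ ∘ ⇑γ = id := by funext x; exact γ.symm_apply_apply x
    rw [this, Set.image_id]

/-! ### The group `J̃` -/

lemma aPlus_one : aPlus (1 : (Fin n → ℝ) ≃ₗ[ℝ] (Fin n → ℝ)) = 1 :=
  LinearEquiv.ext fun _ => rfl

lemma aPlus_mul (α β : (Fin n → ℝ) ≃ₗ[ℝ] (Fin n → ℝ)) :
    aPlus (α * β) = aPlus α * aPlus β :=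
  LinearEquiv.ext fun _ => rfl

lemma aPlus_mul_aMinus (α β : (Fin n → ℝ) ≃ₗ[ℝ] (Fin n → ℝ)) :
    aPlus α * aMinus β = aMinus (α * β) :=
  LinearEquiv.ext fun _ => rfl

lemma aMinus_mul_aPlus (α β : (Fin n → ℝ) ≃ₗ[ℝ] (Fin n → ℝ)) :
    aMinus α * aPlus β = aMinus (α * β) :=
  LinearEquiv.ext fun _ => rfl

lemma aMinus_mul_aMinus (α β : (Fin n → ℝ) ≃ₗ[ℝ] (Fin n → ℝ)) :
    aMinus α * aMinus β = aPlus (α * β) := by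
  apply LinearEquiv.ext
  intro p
  show ((α * β) p.1, -(-p.2)) = ((α * β) p.1, p.2)
  rw [neg_neg]

lemma aPlus_inv (α : (Fin n → ℝ) ≃ₗ[ℝ] (Fin n → ℝ)) : aPlus α⁻¹ = (aPlus α)⁻¹ :=
  (inv_eq_of_mul_eq_one_right (by rw [← aPlus_mul, mul_inv_cancel, aPlus_one])).symm

lemma aMinus_inv (α : (Fin n → ℝ) ≃ₗ[ℝ] (Fin n → ℝ)) : aMinus α⁻¹ = (aMinus α)⁻¹ :=
  (inv_eq_of_mul_eq_one_right (by rw [aMinus_mul_aMinus, mul_inv_cancel, aPlus_one])).symm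

lemma isOrthoN_one : IsOrthoN (1 : (Fin n → ℝ) ≃ₗ[ℝ] (Fin n → ℝ)) := fun _ _ => rfl

lemma isOrthoN_mul {α β : (Fin n → ℝ) ≃ₗ[ℝ] (Fin n → ℝ)}
    (hα : IsOrthoN α) (hβ : IsOrthoN β) : IsOrthoN (α * β) := fun a c => by
  show dotn (α (β a)) (α (β c)) = dotn a c
  rw [hα, hβ]

lemma isOrthoN_inv {α : (Fin n → ℝ) ≃ₗ[ℝ] (Fin n → ℝ)}
    (hα : IsOrthoN α) : IsOrthoN α⁻¹ := fun a c => by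
  have h2 := hα (α⁻¹ a) (α⁻¹ c)
  rw [show α (α⁻¹ a) = a from α.apply_symm_apply a,
    show α (α⁻¹ c) = c from α.apply_symm_apply c] at h2
  exact h2.symm

variable {L : Set (V1 n)} {y0 : ℝ}

lemma jt_one : (1 : (Fin n → ℝ) ≃ₗ[ℝ] (Fin n → ℝ)) ∈ Jt L y0 :=
  ⟨isOrthoN_one, Or.inl (by rw [aPlus_one]; exact holL_one L)⟩

lemma jt_mul {α β : (Fin n → ℝ) ≃ₗ[ℝ] (Fin n → ℝ)}
    (hα : α ∈ Jt L y0) (hβ : β ∈ Jt L y0) : α * β ∈ Jt L y0 := by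
  refine ⟨isOrthoN_mul hα.1 hβ.1, ?_⟩
  rcases hα.2 with h1 | ⟨hy, h1⟩ <;> rcases hβ.2 with h2 | ⟨hy2, h2⟩
  · exact Or.inl (by rw [aPlus_mul]; exact holL_mul h1 h2)
  · exact Or.inr ⟨hy2, by rw [← aPlus_mul_aMinus]; exact holL_mul h1 h2⟩
  · exact Or.inr ⟨hy, by rw [← aMinus_mul_aPlus]; exact holL_mul h1 h2⟩
  · exact Or.inl (by rw [← aMinus_mul_aMinus]; exact holL_mul h1 h2)

lemma jt_inv {α : (Fin n → ℝ) ≃ₗ[ℝ] (Fin n → ℝ)}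
    (hα : α ∈ Jt L y0) : α⁻¹ ∈ Jt L y0 := by
  refine ⟨isOrthoN_inv hα.1, ?_⟩
  rcases hα.2 with h1 | ⟨hy, h1⟩
  · exact Or.inl (by rw [aPlus_inv]; exact holL_inv h1)
  · exact Or.inr ⟨hy, by rw [aMinus_inv]; exact holL_inv h1⟩

/-! ### The equivalence relation induced by `J̃` -/

/-- `q` is related to `p` when its projection lies in the `J̃`-orbit of that of `p`. -/
def Rjt (L : Set (V1 n)) (y0 : ℝ) (p q : V1 n) : Prop :=
  ∃ α ∈ Jt L y0, q.1 = α p.1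

lemma rjt_refl (p : V1 n) : Rjt L y0 p p := ⟨1, jt_one, rfl⟩

lemma rjt_symm {p q : V1 n} (h : Rjt L y0 p q) : Rjt L y0 q p := by
  obtain ⟨α, hα, h⟩ := h
  exact ⟨α⁻¹, jt_inv hα, by rw [h]; exact (α.symm_apply_apply p.1).symm⟩

lemma rjt_trans {p q s : V1 n} (h : Rjt L y0 p q) (h' : Rjt L y0 q s) : Rjt L y0 p s := by
  obtain ⟨α, hα, h⟩ := h
  obtain ⟨β, hβ, h'⟩ := h'
  exact ⟨β * α, jt_mul hβ hα, by rw [h', h]; rfl⟩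

/-- The setoid on `ℝ^{n+1}` whose classes project to `J̃`-orbits. -/
def jtSetoid (L : Set (V1 n)) (y0 : ℝ) : Setoid (V1 n) :=
  ⟨Rjt L y0, ⟨rjt_refl, rjt_symm, rjt_trans⟩⟩

/-! ### The key description of `S_{k'}·k'` -/

lemma image_Sk_eq {k k' : V1 n} (hk' : k' ∈ HOrb L k) :
    (fun σ : V1 n ≃ₗ[ℝ] V1 n => σ k') '' Sk L y0 k'
      = {q ∈ HOrb L k | Rjt L y0 k' q} := by
  obtain ⟨γ0, hγ0, rfl⟩ := hk'
  ext q
  constructor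
  · rintro ⟨σ, hσ, rfl⟩
    rw [Sk, Set.mem_iUnion₂] at hσ
    obtain ⟨α, hα, hσH, hproj⟩ := hσ
    exact ⟨⟨σ * γ0, holL_mul hσH hγ0, rfl⟩, α, hα, hproj⟩
  · rintro ⟨⟨δ, hδ, rfl⟩, α, hα, hproj⟩
    have hkey : (δ * γ0⁻¹) (γ0 k) = δ k := by
      show δ (γ0⁻¹ (γ0 k)) = δ k
      rw [show γ0⁻¹ (γ0 k) = k from γ0.symm_apply_apply k]
    refine ⟨δ * γ0⁻¹, ?_, hkey⟩
    rw [Sk, Set.mem_iUnion₂]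
    refine ⟨α, hα, holL_mul hδ (holL_inv hγ0), ?_⟩
    rw [hkey]
    exact hproj

/-! ### Finiteness of the orbit -/

lemma mem_latticeOf_self (b : Fin (n+1) → V1 n) (i : Fin (n+1)) : b i ∈ latticeOf b := by
  refine ⟨fun j => if j = i then 1 else 0, ?_⟩
  rw [Finset.sum_eq_single i]
  · simp
  · intro j _ hj; simp [hj]
  · intro h; exact absurd (Finset.mem_univ i) h

lemma dual_dot_int {b : Fin (n+1) → V1 n} {k : V1 n} (hk : k ∈ dualLat (latticeOf b))
    {δ : V1 n ≃ₗ[ℝ] V1 n} (hδ : δ ∈ HolL (latticeOf b)) (i : Fin (n+1)) :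
    ∃ m : ℤ, dot1 (δ k) (b i) = (m : ℝ) := by
  obtain ⟨l, hl, hlb⟩ : b i ∈ (⇑δ) '' (latticeOf b) := by
    rw [hδ.2]; exact mem_latticeOf_self b i
  obtain ⟨m, hm⟩ := hk l hl
  exact ⟨m, by rw [← hlb, hδ.1]; exact hm⟩

lemma orbit_finite {b : Fin (n+1) → V1 n} (hb : LinearIndependent ℝ b)
    {k : V1 n} (hk : k ∈ dualLat (latticeOf b)) : (HOrb (latticeOf b) k).Finite := by
  classical
  have hcard : Fintype.card (Fin (n+1)) = Module.finrank ℝ (V1 n) := by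
    simp [Module.finrank_prod]
  set BB := basisOfLinearIndependentOfCardEqFinrank hb hcard with hBBdef
  have hBB : ⇑BB = b := coe_basisOfLinearIndependentOfCardEqFinrank hb hcard
  set F : V1 n → (Fin (n+1) → ℝ) := fun v i => dot1 v (b i) with hF
  -- injectivity of F
  have hFinj : Function.Injective F := by
    intro v w h
    have hzero : ∀ i, dot1 (v - w) (b i) = 0 := by
      intro i
      have := congrFun h i
      rw [dot1_sub_left]
      simp only [hF] at this
      rw [this]; ring
    have hrep : (∑ i, BB.repr (v - w) i • b i) = v - w := by
      conv_rhs => rw [← BB.sum_repr (v - w)]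
      simp_rw [hBB]
    have hself : dot1 (v - w) (v - w) = 0 := by
      have h1 := congrArg (dotR (v - w)) hrep
      rw [map_sum] at h1
      simp only [_root_.map_smul, dotR_apply, hzero, smul_eq_mul, mul_zero,
        Finset.sum_const_zero] at h1
      exact h1.symm
    have := dot1_self_eq_zero hself
    exact sub_eq_zero.mp this
  set K := Real.sqrt (dot1 k k) with hKdef
  have hK0 : 0 ≤ K := Real.sqrt_nonneg _
  set D : Fin (n+1) → ℝ := fun i => (∑ j, |(b i).1 j|) + |(b i).2| with hD
  have hD0 : ∀ i, 0 ≤ D i := by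
    intro i
    have h1 : (0:ℝ) ≤ ∑ j, |(b i).1 j| := Finset.sum_nonneg fun j _ => abs_nonneg _
    have h2 := abs_nonneg (b i).2
    simp only [hD]; linarith
  -- coordinate bound on orbit elements
  have habs : ∀ v ∈ HOrb (latticeOf b) k, ∀ i, |F v i| ≤ K * D i := by
    rintro v ⟨δ, hδ, rfl⟩ i
    have hvv : dot1 (δ k) (δ k) = dot1 k k := hδ.1 k k
    have hco1 : ∀ j, |(δ k).1 j| ≤ K := by
      intro j
      have h1 := sq_fst_le (δ k) j
      rw [hvv] at h1
      calc |(δ k).1 j| = Real.sqrt ((δ k).1 j * (δ k).1 j) :=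
            (Real.sqrt_mul_self_eq_abs _).symm
        _ ≤ K := Real.sqrt_le_sqrt h1
    have hco2 : |(δ k).2| ≤ K := by
      have h1 := sq_snd_le (δ k)
      rw [hvv] at h1
      calc |(δ k).2| = Real.sqrt ((δ k).2 * (δ k).2) := (Real.sqrt_mul_self_eq_abs _).symm
        _ ≤ K := Real.sqrt_le_sqrt h1
    have hstep : |F (δ k) i| ≤ (∑ j, |(δ k).1 j| * |(b i).1 j|) + |(δ k).2| * |(b i).2| := by
      calc |F (δ k) i| = |(∑ j, (δ k).1 j * (b i).1 j) + (δ k).2 * (b i).2| := rfl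
        _ ≤ |∑ j, (δ k).1 j * (b i).1 j| + |(δ k).2 * (b i).2| := abs_add_le _ _
        _ ≤ (∑ j, |(δ k).1 j * (b i).1 j|) + |(δ k).2 * (b i).2| := by
            gcongr; exact Finset.abs_sum_le_sum_abs _ _
        _ = (∑ j, |(δ k).1 j| * |(b i).1 j|) + |(δ k).2| * |(b i).2| := by
            simp [abs_mul]
    calc |F (δ k) i| ≤ (∑ j, |(δ k).1 j| * |(b i).1 j|) + |(δ k).2| * |(b i).2| := hstep
      _ ≤ (∑ j, K * |(b i).1 j|) + K * |(b i).2| := by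
          gcongr with j hj
          · exact hco1 j
      _ = K * D i := by simp only [hD]; rw [← Finset.mul_sum]; ring
  set Ctot : ℝ := ∑ i, K * D i with hCtot
  have hbnd : ∀ v ∈ HOrb (latticeOf b) k, ∀ i, |F v i| ≤ Ctot := by
    intro v hv i
    calc |F v i| ≤ K * D i := habs v hv i
      _ ≤ Ctot := Finset.single_le_sum
            (fun j _ => mul_nonneg hK0 (hD0 j)) (Finset.mem_univ i)
  set M : ℤ := ⌈Ctot⌉ with hM
  have hCM : Ctot ≤ (M : ℝ) := Int.le_ceil _
  have himg : F '' HOrb (latticeOf b) k ⊆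
      Set.pi Set.univ (fun _ : Fin (n+1) => (fun m : ℤ => (m : ℝ)) '' ↑(Finset.Icc (-M) M)) := by
    rintro _ ⟨v, hv, rfl⟩
    intro i _
    obtain ⟨δ, hδ, rfl⟩ := hv
    obtain ⟨m, hm⟩ := dual_dot_int hk hδ i
    have hFm : F (δ k) i = (m : ℝ) := hm
    have habsm : |(m : ℝ)| ≤ (M : ℝ) := by
      rw [← hFm]
      exact le_trans (hbnd (δ k) ⟨δ, hδ, rfl⟩ i) hCM
    obtain ⟨hm1, hm2⟩ := abs_le.mp habsm
    refine ⟨m, ?_, hFm.symm⟩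
    simp only [Finset.coe_Icc, Set.mem_Icc]
    constructor
    · exact_mod_cast hm1
    · exact_mod_cast hm2
  have hTfin : (Set.pi Set.univ
      (fun _ : Fin (n+1) => (fun m : ℤ => (m : ℝ)) '' ↑(Finset.Icc (-M) M))).Finite :=
    Set.Finite.pi fun _ => (Finset.Icc (-M) M).finite_toSet.image _
  exact Set.Finite.of_finite_image (hTfin.subset himg) hFinj.injOn

end Stmt13


/-- the orbit `H_ℒ·k` decomposes as a disjoint union of sets
`S_{δᵢk}·(δᵢk)`, and consequently `P(H_ℒ·k)` is a disjoint union of `J̃`-orbits. -/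
theorem stmt_13 (n : ℕ) (hn : 1 ≤ n) (b : Fin (n+1) → V1 n) (hb : LinearIndependent ℝ b)
    (y0 : ℝ) (hy0 : 0 < y0) (k : V1 n) (hk : k ∈ dualLat (latticeOf b)) :
    ∃ r : ℕ, ∃ hr : 0 < r, ∃ δ : Fin r → (V1 n ≃ₗ[ℝ] V1 n),
      δ ⟨0, hr⟩ = 1 ∧
      (∀ i, δ i ∈ HolL (latticeOf b)) ∧
      (∀ i j, i ≠ j →
        ((fun σ : V1 n ≃ₗ[ℝ] V1 n => σ (δ i k)) ''
            Sk (latticeOf b) y0 (δ i k)) ∩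
          ((fun σ : V1 n ≃ₗ[ℝ] V1 n => σ (δ j k)) ''
            Sk (latticeOf b) y0 (δ j k)) = ∅) ∧
      (⋃ i, (fun σ : V1 n ≃ₗ[ℝ] V1 n => σ (δ i k)) ''
          Sk (latticeOf b) y0 (δ i k)) = HOrb (latticeOf b) k ∧
      (∀ i j, i ≠ j →
        JOrb (latticeOf b) y0 ((δ i k).1) ∩ JOrb (latticeOf b) y0 ((δ j k).1) = ∅) ∧
      (⋃ i, JOrb (latticeOf b) y0 ((δ i k).1)) =
        Prod.fst '' HOrb (latticeOf b) k := by
  classical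
  set L := latticeOf b with hLdef
  have hOfin : (HOrb L k).Finite := Stmt13.orbit_finite hb hk
  have hkO : k ∈ HOrb L k := ⟨1, Stmt13.holL_one L, rfl⟩
  set sd := Stmt13.jtSetoid L y0 with hsd
  set s : Finset (V1 n) := hOfin.toFinset with hsdef
  have hs : ∀ v, v ∈ s ↔ v ∈ HOrb L k := fun v => hOfin.mem_toFinset
  set u : Finset (Quotient sd) := s.image (Quotient.mk sd) with hudef
  have hku : Quotient.mk sd k ∈ u := Finset.mem_image_of_mem _ ((hs k).mpr hkO)
  have hr : 0 < u.card := Finset.card_pos.mpr ⟨_, hku⟩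
  have hex : ∀ c ∈ u, ∃ δ : V1 n ≃ₗ[ℝ] V1 n, δ ∈ HolL L ∧ Quotient.mk sd (δ k) = c := by
    intro c hc
    obtain ⟨v, hv, rfl⟩ := Finset.mem_image.mp hc
    obtain ⟨δ, hδ, rfl⟩ := (hs v).mp hv
    exact ⟨δ, hδ, rfl⟩
  set rep : Quotient sd → (V1 n ≃ₗ[ℝ] V1 n) := fun c =>
    if c = Quotient.mk sd k then 1
    else if hc : ∃ δ : V1 n ≃ₗ[ℝ] V1 n, δ ∈ HolL L ∧ Quotient.mk sd (δ k) = c then hc.choose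
    else 1 with hrep
  have hrepH : ∀ c ∈ u, rep c ∈ HolL L := by
    intro c hc
    by_cases h : c = Quotient.mk sd k
    · subst h
      rw [hrep]
      simp only [eq_self_iff_true, if_true]
      exact Stmt13.holL_one L
    · have hcex := hex c hc
      rw [hrep]
      simp only [if_neg h, dif_pos hcex]
      exact hcex.choose_spec.1
  have hrepcl : ∀ c ∈ u, Quotient.mk sd (rep c k) = c := by
    intro c hc
    by_cases h : c = Quotient.mk sd k
    · subst h
      rw [hrep]
      simp only [eq_self_iff_true, if_true]
      rfl
    · have hcex := hex c hc
      rw [hrep]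
      simp only [if_neg h, dif_pos hcex]
      exact hcex.choose_spec.2
  set e := u.equivFin.symm with he
  set z : Fin u.card := ⟨0, hr⟩ with hz
  set i0 : Fin u.card := u.equivFin ⟨Quotient.mk sd k, hku⟩ with hi0
  set π := Equiv.swap z i0 with hπ
  set cl : Fin u.card → Quotient sd := fun i => ↑(e (π i)) with hcl
  set δf : Fin u.card → (V1 n ≃ₗ[ℝ] V1 n) := fun i => rep (cl i) with hδf
  have hclmem : ∀ i, cl i ∈ u := fun i => (e (π i)).2
  have hδH : ∀ i, δf i ∈ HolL L := fun i => hrepH _ (hclmem i)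
  have hclq : ∀ i, Quotient.mk sd (δf i k) = cl i := fun i => hrepcl _ (hclmem i)
  have hclinj : Function.Injective cl := by
    intro i j hij
    have h2 : e (π i) = e (π j) := Subtype.ext hij
    exact π.injective (e.injective h2)
  have hclsurj : ∀ c ∈ u, ∃ i, cl i = c := by
    intro c hc
    refine ⟨π.symm (e.symm ⟨c, hc⟩), ?_⟩
    show ↑(e (π (π.symm (e.symm ⟨c, hc⟩)))) = c
    rw [Equiv.apply_symm_apply, Equiv.apply_symm_apply]
  have hδz : δf z = 1 := by
    have h1 : cl z = Quotient.mk sd k := by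
      show ↑(e (π z)) = Quotient.mk sd k
      rw [hπ, Equiv.swap_apply_left, hi0, he, Equiv.symm_apply_apply]
    show rep (cl z) = 1
    rw [h1, hrep]
    simp only [eq_self_iff_true, if_true]
  have hSdesc : ∀ i, (fun σ : V1 n ≃ₗ[ℝ] V1 n => σ (δf i k)) '' Sk L y0 (δf i k)
      = {q ∈ HOrb L k | Stmt13.Rjt L y0 (δf i k) q} :=
    fun i => Stmt13.image_Sk_eq ⟨δf i, hδH i, rfl⟩
  have hRclass : ∀ (p q : V1 n),
      Stmt13.Rjt L y0 p q ↔ Quotient.mk sd p = Quotient.mk sd q :=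
    fun p q => ⟨fun h => Quotient.sound h, fun h => Quotient.exact h⟩
  refine ⟨u.card, hr, δf, hδz, hδH, ?_, ?_, ?_, ?_⟩
  · -- disjointness of S-images
    intro i j hij
    rw [hSdesc i, hSdesc j]
    ext q
    simp only [Set.mem_inter_iff, Set.mem_setOf_eq, Set.mem_empty_iff_false, iff_false]
    rintro ⟨⟨hq1, hR1⟩, hq2, hR2⟩
    apply hij
    apply hclinj
    rw [← hclq i, ← hclq j]
    exact ((hRclass _ _).mp hR1).trans ((hRclass _ _).mp hR2).symm
  · -- union of S-images
    ext q
    simp only [Set.mem_iUnion]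
    constructor
    · rintro ⟨i, hi⟩
      rw [hSdesc i] at hi
      exact hi.1
    · intro hq
      have hqu : Quotient.mk sd q ∈ u := Finset.mem_image_of_mem _ ((hs q).mpr hq)
      obtain ⟨i, hi⟩ := hclsurj _ hqu
      refine ⟨i, ?_⟩
      rw [hSdesc i]
      exact ⟨hq, (hRclass _ _).mpr (by rw [hclq i, hi])⟩
  · -- disjointness of J̃-orbits
    intro i j hij
    ext x
    simp only [Set.mem_inter_iff, Set.mem_empty_iff_false, iff_false]
    rintro ⟨⟨α, hα, hx1⟩, β, hβ, hx2⟩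
    apply hij
    apply hclinj
    rw [← hclq i, ← hclq j]
    apply (hRclass _ _).mp
    have hx1' : α ((δf i k).1) = x := hx1
    have hx2' : β ((δf j k).1) = x := hx2
    refine ⟨β⁻¹ * α, Stmt13.jt_mul (Stmt13.jt_inv hβ) hα, ?_⟩
    show (δf j k).1 = β.symm (α ((δf i k).1))
    rw [hx1', ← hx2', β.symm_apply_apply]
  · -- union of J̃-orbits
    ext x
    simp only [Set.mem_iUnion]
    constructor
    · rintro ⟨i, α, hα, rfl⟩
      rcases hα.2 with hplus | ⟨_, hminus⟩
      · exact ⟨(aPlus α * δf i) k,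
          ⟨aPlus α * δf i, Stmt13.holL_mul hplus (hδH i), rfl⟩, rfl⟩
      · exact ⟨(aMinus α * δf i) k,
          ⟨aMinus α * δf i, Stmt13.holL_mul hminus (hδH i), rfl⟩, rfl⟩
    · rintro ⟨q, hq, rfl⟩
      have hqu : Quotient.mk sd q ∈ u := Finset.mem_image_of_mem _ ((hs q).mpr hq)
      obtain ⟨i, hi⟩ := hclsurj _ hqu
      have hR : Stmt13.Rjt L y0 (δf i k) q := (hRclass _ _).mpr (by rw [hclq i, hi])
      obtain ⟨α, hα, hproj⟩ := hR
      exact ⟨i, α, hα, hproj.symm⟩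

end
end

section
/- Let ℒ ⊂ ℝ^{n+1} be a lattice, y0 > 0, k ∈ ℒ*, and let V be the ℂ-linear span of {ω_{δk} : δ ∈ H_ℒ}. Then W = Π_{y0}(V) is a subspace of functions on ℝ^n that is invariant under all translations (for every v ∈ ℝ^n and g ∈ W, the function x ↦ g(x − v) lies in W) and invariant under J̃ (for every α ∈ J̃ and g ∈ W, the function x ↦ g(α⁻¹x) lies in W). -/
open MeasureTheory
open scoped Classical

noncomputable section

lemma expz_int (m : ℤ) : expz (m : ℝ) = 1 := by
  unfold expz
  push_cast
  rw [show 2 * (Real.pi : ℂ) * Complex.I * m = m * (2 * Real.pi * Complex.I) by ring]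
  exact Complex.exp_int_mul_two_pi_mul_I m

lemma dotn_add {n : ℕ} (a b c : Fin n → ℝ) : dotn a (b + c) = dotn a b + dotn a c := by
  simp [dotn, mul_add, Finset.sum_add_distrib]

lemma dot1_add {n : ℕ} (m p q : V1 n) : dot1 m (p + q) = dot1 m p + dot1 m q := by
  simp only [dot1, Prod.fst_add, Prod.snd_add, dotn_add, mul_add]
  ring

lemma dot1_sub {n : ℕ} (m p q : V1 n) : dot1 m (p - q) = dot1 m p - dot1 m q := by
  have := dot1_add m (p - q) q
  simp only [sub_add_cancel] at this
  linarith

lemma wave_add {n : ℕ} (m p q : V1 n) : wave m (p + q) = wave m p * wave m q := by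
  simp [wave, dot1_add, expz_add]

lemma wave_sub {n : ℕ} (m p q : V1 n) :
    wave m (p - q) = expz (-(dot1 m q)) * wave m p := by
  simp only [wave]
  rw [dot1_sub, sub_eq_add_neg, expz_add, mul_comm]

lemma HolL_symm_mem {n : ℕ} {L : Set (V1 n)} {δ : V1 n ≃ₗ[ℝ] V1 n}
    (hδ : δ ∈ HolL L) {l : V1 n} (hl : l ∈ L) : δ.symm l ∈ L := by
  have : l ∈ (⇑δ) '' L := hδ.2.symm ▸ hl
  obtain ⟨l', hl', rfl⟩ := this
  simpa using hl'

lemma HolL_trans {n : ℕ} {L : Set (V1 n)} {δ γ : V1 n ≃ₗ[ℝ] V1 n}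
    (hδ : δ ∈ HolL L) (hγ : γ ∈ HolL L) : δ.trans γ ∈ HolL L := by
  constructor
  · intro a b
    have h1 := hγ.1 (δ a) (δ b)
    have h2 := hδ.1 a b
    simpa [LinearEquiv.trans_apply] using h1.trans h2
  · have : (⇑(δ.trans γ)) = (⇑γ) ∘ (⇑δ) := rfl
    rw [this, Set.image_comp, hδ.2, hγ.2]

lemma dot1_equiv_symm {n : ℕ} {δ : V1 n ≃ₗ[ℝ] V1 n} (hδ : IsOrtho1 δ)
    (a b : V1 n) : dot1 (δ a) b = dot1 a (δ.symm b) := by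
  have := hδ a (δ.symm b)
  rw [LinearEquiv.apply_symm_apply] at this
  exact this

lemma wave_mem_modeV {n : ℕ} {L : Set (V1 n)} {k : V1 n} {δ : V1 n ≃ₗ[ℝ] V1 n}
    (hδ : δ ∈ HolL L) : wave (δ k) ∈ modeV L k :=
  Submodule.subset_span ⟨δ, hδ, rfl⟩

/-- If composition with `T` maps every generating wave into `V`,
then `V` is invariant under composition with `T`. -/
lemma modeV_comp {n : ℕ} {L : Set (V1 n)} {k : V1 n} (T : V1 n → V1 n)
    (hT : ∀ δ ∈ HolL L, (fun p => wave (δ k) (T p)) ∈ modeV L k)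
    {f : V1 n → ℂ} (hf : f ∈ modeV L k) :
    (fun p => f (T p)) ∈ modeV L k := by
  have hmap : Submodule.map (LinearMap.funLeft ℂ ℂ T) (modeV L k) ≤ modeV L k := by
    rw [modeV, Submodule.map_span]
    apply Submodule.span_le.mpr
    rintro _ ⟨_, ⟨δ, hδ, rfl⟩, rfl⟩
    exact hT δ hδ
  exact hmap ⟨f, hf, rfl⟩

/-- Periodicity: if `t ∈ ℒ` and `k ∈ ℒ*`, every element of `V` is `t`-periodic. -/
lemma modeV_periodic {n : ℕ} {L : Set (V1 n)} {k : V1 n} (hk : k ∈ dualLat L)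
    {t : V1 n} (ht : t ∈ L) {f : V1 n → ℂ} (hf : f ∈ modeV L k) (p : V1 n) :
    f (p + t) = f p := by
  have hker : modeV L k ≤
      LinearMap.ker ((LinearMap.funLeft ℂ ℂ (fun p : V1 n => p + t)) - LinearMap.id) := by
    rw [modeV]
    apply Submodule.span_le.mpr
    rintro _ ⟨δ, hδ, rfl⟩
    rw [SetLike.mem_coe, LinearMap.mem_ker]
    funext q
    have hwt : wave (δ k) t = 1 := by
      have h1 : dot1 (δ k) t = dot1 k (δ.symm t) := dot1_equiv_symm hδ.1 k t
      obtain ⟨m, hm⟩ := hk (δ.symm t) (HolL_symm_mem hδ ht)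
      simp [wave, h1, hm, expz_int]
    simp [LinearMap.sub_apply, LinearMap.funLeft_apply, wave_add, hwt]
  have := hker hf
  rw [LinearMap.mem_ker] at this
  have h := congrFun this p
  simp only [LinearMap.sub_apply, LinearMap.funLeft_apply, LinearMap.id_apply,
    Pi.sub_apply, Pi.zero_apply, sub_eq_zero] at h
  exact h

/-- `V` is invariant under translations. -/
lemma modeV_translate {n : ℕ} {L : Set (V1 n)} {k : V1 n} (t : V1 n)
    {f : V1 n → ℂ} (hf : f ∈ modeV L k) :
    (fun p => f (p - t)) ∈ modeV L k := by
  apply modeV_comp (fun p => p - t) _ hf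
  intro δ hδ
  have : (fun p => wave (δ k) (p - t)) = expz (-(dot1 (δ k) t)) • wave (δ k) := by
    funext p
    simp [wave_sub, Pi.smul_apply, smul_eq_mul]
  rw [this]
  exact Submodule.smul_mem _ _ (wave_mem_modeV hδ)

/-- `V` is invariant under composition with the inverse of a holohedry element. -/
lemma modeV_holo {n : ℕ} {L : Set (V1 n)} {k : V1 n} {γ : V1 n ≃ₗ[ℝ] V1 n}
    (hγ : γ ∈ HolL L) {f : V1 n → ℂ} (hf : f ∈ modeV L k) :
    (fun p => f (γ.symm p)) ∈ modeV L k := by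
  apply modeV_comp (fun p => γ.symm p) _ hf
  intro δ hδ
  have : (fun p => wave (δ k) (γ.symm p)) = wave ((δ.trans γ) k) := by
    funext p
    simp only [wave, LinearEquiv.trans_apply]
    rw [dot1_equiv_symm hγ.1 (δ k) p]
  rw [this]
  exact wave_mem_modeV (HolL_trans hδ hγ)

/-- `W = Π_{y0}(V)` is invariant under all translations of `ℝⁿ`
and under `J̃`. -/
theorem stmt_16 (n : ℕ) (hn : 1 ≤ n) (b : Fin (n+1) → V1 n) (hb : LinearIndependent ℝ b)
    (y0 : ℝ) (hy0 : 0 < y0) (k : V1 n) (hk : k ∈ dualLat (latticeOf b)) :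
    (∀ v : Fin n → ℝ,
      ∀ g ∈ Proj y0 '' (modeV (latticeOf b) k : Set (V1 n → ℂ)),
        (fun x => g (x - v)) ∈
          Proj y0 '' (modeV (latticeOf b) k : Set (V1 n → ℂ))) ∧
    (∀ α ∈ Jt (latticeOf b) y0,
      ∀ g ∈ Proj y0 '' (modeV (latticeOf b) k : Set (V1 n → ℂ)),
        (fun x => g (α.symm x)) ∈
          Proj y0 '' (modeV (latticeOf b) k : Set (V1 n → ℂ))) := by
  set L := latticeOf b with hL
  constructor
  · -- translation invariance
    rintro v g ⟨f, hf, rfl⟩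
    refine ⟨fun p => f (p - ((v, (0:ℝ)) : V1 n)), modeV_translate _ hf, ?_⟩
    funext x
    simp only [Proj, Prod.mk_sub_mk, sub_zero]
  · -- J̃ invariance
    rintro α ⟨hαo, hcase⟩ g ⟨f, hf, rfl⟩
    rcases hcase with hplus | ⟨hmem, hminus⟩
    · -- case α₊ ∈ H_ℒ
      refine ⟨fun p => f ((aPlus α).symm p), modeV_holo hplus hf, ?_⟩
      funext x
      have hsymm : ∀ y : ℝ, (aPlus α).symm (x, y) = (α.symm x, y) := by
        intro y
        simp [aPlus, LinearEquiv.prodCongr_symm, LinearEquiv.prodCongr_apply]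
      simp only [Proj, hsymm]
    · -- case (0, y0) ∈ ℒ and α₋ ∈ H_ℒ
      refine ⟨fun p => f ((aMinus α).symm p), modeV_holo hminus hf, ?_⟩
      funext x
      have hsymm : ∀ y : ℝ, (aMinus α).symm (x, y) = (α.symm x, -y) := by
        intro y
        simp [aMinus, LinearEquiv.prodCongr_symm, LinearEquiv.prodCongr_apply, LinearEquiv.neg_apply]
      have hper : ∀ y : ℝ, f (α.symm x, -y) = f (α.symm x, y0 - y) := by
        intro y
        have := modeV_periodic hk hmem hf ((α.symm x, -y) : V1 n)
        rw [← this]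
        norm_num [Prod.mk_add_mk]
        ring_nf
      show (∫ y in (0:ℝ)..y0, f ((aMinus α).symm (x, y))) = ∫ y in (0:ℝ)..y0, f (α.symm x, y)
      calc (∫ y in (0:ℝ)..y0, f ((aMinus α).symm (x, y)))
          = ∫ y in (0:ℝ)..y0, f (α.symm x, y0 - y) := by
            simp only [hsymm, hper]
        _ = ∫ y in (y0 - y0)..(y0 - 0), f (α.symm x, y) :=
            intervalIntegral.integral_comp_sub_left (fun y => f (α.symm x, y)) y0
        _ = ∫ y in (0:ℝ)..y0, f (α.symm x, y) := by norm_num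

end
end
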